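/- Let X and Y be finite-dimensional normed spaces, H ⊆ X open, f, g : H → Y locally Lipschitz, and A := {x ∈ H : f(x) = g(x)}. Then for Lebesgue almost every x ∈ A, both Df(x) and Dg(x) exist and are equal. -/

import Mathlib

open Metric MeasureTheory

open Filter Set Asymptotics Topology in
/-- If `h` vanishes on a set `A` having density one at `x ∈ A`, and `h` has derivative `M`
at `x`, then `M = 0`. -/
lemma aux_zero_of_density_one {X Y : Type*} [NormedAddCommGroup X] [NormedSpace ℝ X]
    [FiniteDimensional ℝ X] [MeasurableSpace X] [BorelSpace X]
    [NormedAddCommGroup Y] [NormedSpace ℝ Y]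
    (μ : Measure X) [μ.IsAddHaarMeasure]
    {A : Set X} {x : X} (hx : x ∈ A)
    (hd : Tendsto (fun r => μ (A ∩ closedBall x r) / μ (closedBall x r)) (𝓝[>] 0) (𝓝 1))
    {h : X → Y} {M : X →L[ℝ] Y} (hM : HasFDerivAt h M x)
    (h0 : ∀ y ∈ A, h y = 0) : M = 0 := by
  ext v
  simp only [ContinuousLinearMap.zero_apply]
  rw [← norm_le_zero_iff]
  refine le_of_forall_pos_le_add ?_
  intro η hη
  rw [zero_add]
  have hMn : (0:ℝ) ≤ ‖M‖ := norm_nonneg _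
  set δ : ℝ := η / (2 * (‖M‖ + 1)) with hδ
  have δpos : 0 < δ := by positivity
  have hvδ : 0 < ‖v‖ + δ := by positivity
  set ε : ℝ := η / (2 * (‖v‖ + δ)) with hε
  have εpos : 0 < ε := by positivity
  have hlo : ∀ᶠ y in nhds x, ‖h y - h x - M (y - x)‖ ≤ ε * ‖y - x‖ :=
    hM.isLittleO.def εpos
  rw [Metric.eventually_nhds_iff] at hlo
  obtain ⟨ρ, ρpos, hρ⟩ := hlo
  have hne := Measure.eventually_nonempty_inter_smul_of_density_one μ A x hd
    (closedBall v δ) measurableSet_closedBall (measure_closedBall_pos μ v δpos).ne'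
  have hsmall : Set.Ioo (0:ℝ) (ρ / (‖v‖ + δ)) ∈ 𝓝[>] (0:ℝ) :=
    Ioo_mem_nhdsGT_of_mem ⟨le_refl 0, by positivity⟩
  obtain ⟨r, hrne, hrIoo⟩ := (hne.and (eventually_of_mem hsmall fun r hr => hr)).exists
  obtain ⟨rpos, hrρ⟩ := hrIoo
  obtain ⟨y, hyA, hymem⟩ := hrne
  rw [Set.singleton_add, Set.image_add_left, Set.mem_preimage] at hymem
  obtain ⟨w, hw, hxz⟩ := hymem
  have hwv : ‖w - v‖ ≤ δ := by
    rw [← dist_eq_norm]; exact mem_closedBall.1 hw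
  have hwn : ‖w‖ ≤ ‖v‖ + δ := by
    calc ‖w‖ = ‖v + (w - v)‖ := by congr 1; abel
    _ ≤ ‖v‖ + ‖w - v‖ := norm_add_le _ _
    _ ≤ ‖v‖ + δ := by linarith
  have hxz' : r • w = -x + y := hxz
  have hyx : y - x = r • w := by rw [hxz']; abel
  have hdist : dist y x < ρ := by
    rw [dist_eq_norm, hyx, norm_smul, Real.norm_of_nonneg rpos.le]
    calc r * ‖w‖ ≤ r * (‖v‖ + δ) := by nlinarith
    _ < ρ := by
        rw [lt_div_iff₀ hvδ] at hrρ; linarith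
  have hkey : ‖h y - h x - M (y - x)‖ ≤ ε * ‖y - x‖ := hρ hdist
  rw [h0 y hyA, h0 x hx] at hkey
  simp only [sub_zero, zero_sub, norm_neg] at hkey
  rw [hyx, M.map_smul, norm_smul, norm_smul, Real.norm_of_nonneg rpos.le] at hkey
  have hMw : ‖M w‖ ≤ ε * ‖w‖ := by
    have := (mul_le_mul_iff_right₀ rpos).1 (by linarith [hkey] : r * ‖M w‖ ≤ r * (ε * ‖w‖))
    exact this
  have hMw' : ‖M w‖ ≤ η / 2 := by
    calc ‖M w‖ ≤ ε * ‖w‖ := hMw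
    _ ≤ ε * (‖v‖ + δ) := by nlinarith
    _ = η / 2 := by rw [hε]; field_simp
  have hMδ : ‖M‖ * δ ≤ η / 2 := by
    have h2 : δ * (‖M‖ + 1) = η / 2 := by rw [hδ]; field_simp
    nlinarith [δpos.le]
  have hsplit : M v = M (v - w) + M w := by rw [← M.map_add, sub_add_cancel]
  calc ‖M v‖ = ‖M (v - w) + M w‖ := by rw [hsplit]
  _ ≤ ‖M (v - w)‖ + ‖M w‖ := norm_add_le _ _
  _ ≤ ‖M‖ * ‖v - w‖ + η / 2 := by
      gcongr
      exact M.le_opNorm _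
  _ ≤ ‖M‖ * δ + η / 2 := by gcongr; rw [norm_sub_rev]; exact hwv
  _ ≤ η := by linarith

/-- Two locally Lipschitz maps between finite-dimensional normed spaces have, at Lebesgue
almost every point of their agreement set, a common Fréchet derivative. -/
theorem stmt8 {X Y : Type*} [NormedAddCommGroup X] [NormedSpace ℝ X]
    [FiniteDimensional ℝ X] [MeasurableSpace X] [BorelSpace X]
    [NormedAddCommGroup Y] [NormedSpace ℝ Y] [FiniteDimensional ℝ Y]
    (μ : Measure X) [μ.IsAddHaarMeasure]
    (H : Set X) (hH : IsOpen H) (f g : X → Y)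
    (hf : ∀ x ∈ H, ∃ (K : NNReal) (ε : ℝ), 0 < ε ∧ ball x ε ⊆ H ∧
      LipschitzOnWith K f (ball x ε))
    (hg : ∀ x ∈ H, ∃ (K : NNReal) (ε : ℝ), 0 < ε ∧ ball x ε ⊆ H ∧
      LipschitzOnWith K g (ball x ε)) :
    ∀ᵐ x ∂μ, x ∈ {y ∈ H | f y = g y} →
      ∃ L : X →L[ℝ] Y, HasFDerivAt f L x ∧ HasFDerivAt g L x := by
  classical
  set A := {y ∈ H | f y = g y} with hA
  -- continuity of f and g on H
  have hfc : ∀ x ∈ H, ContinuousAt f x := by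
    intro x hx
    obtain ⟨K, ε, εpos, -, hlip⟩ := hf x hx
    exact hlip.continuousOn.continuousAt (ball_mem_nhds x εpos)
  have hgc : ∀ x ∈ H, ContinuousAt g x := by
    intro x hx
    obtain ⟨K, ε, εpos, -, hlip⟩ := hg x hx
    exact hlip.continuousOn.continuousAt (ball_mem_nhds x εpos)
  -- A is measurable
  have hU : IsOpen {y ∈ H | f y ≠ g y} := by
    rw [isOpen_iff_mem_nhds]
    rintro y ⟨hyH, hne⟩
    have hpos : (0:ℝ) < dist (f y) (g y) := dist_pos.2 hne
    have hev : ∀ᶠ z in nhds y, 0 < dist (f z) (g z) :=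
      ((hfc y hyH).dist (hgc y hyH)).eventually_mem (Ioi_mem_nhds hpos)
    filter_upwards [hev, hH.mem_nhds hyH] with z hz hzH
    exact ⟨hzH, dist_pos.1 hz⟩
  have hAmeas : MeasurableSet A := by
    have : A = H \ {y ∈ H | f y ≠ g y} := by
      ext y
      simp only [hA, Set.mem_setOf_eq, Set.mem_diff, not_and, not_not]
      tauto
    rw [this]
    exact hH.measurableSet.diff hU.measurableSet
  -- Step 1: a.e. differentiability on H
  have step1 : ∀ (φ : X → Y), (∀ x ∈ H, ∃ (K : NNReal) (ε : ℝ), 0 < ε ∧ ball x ε ⊆ H ∧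
      LipschitzOnWith K φ (ball x ε)) → ∀ᵐ x ∂μ, x ∈ H → DifferentiableAt ℝ φ x := by
    intro φ hφ
    choose K ε εpos hsub hlip using hφ
    set s : H → Set X := fun z => ball (z : X) (ε z z.2) with hs
    obtain ⟨T, Tcount, hT⟩ := TopologicalSpace.isOpen_iUnion_countable s (fun z => isOpen_ball)
    have hcover : H ⊆ ⋃ z ∈ T, s z := by
      rw [hT]
      intro x hx
      exact Set.mem_iUnion.2 ⟨⟨x, hx⟩, mem_ball_self (εpos x hx)⟩
    have hae : ∀ z : H, ∀ᵐ x ∂μ, x ∈ s z → DifferentiableAt ℝ φ x := by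
      intro z
      filter_upwards [(hlip (z : X) z.2).ae_differentiableWithinAt_of_mem] with x hx hxz
      exact (hx hxz).differentiableAt (isOpen_ball.mem_nhds hxz)
    have := (MeasureTheory.ae_ball_iff Tcount).2 (fun z _ => hae z)
    filter_upwards [this] with x hx hxH
    obtain ⟨z, hzT, hzx⟩ := Set.mem_iUnion₂.1 (hcover hxH)
    exact hx z hzT hzx
  have hdf := step1 f hf
  have hdg := step1 g hg
  -- Step 2: density points of A
  have hdens : ∀ᵐ x ∂μ, x ∈ A → Filter.Tendsto
      (fun r => μ (A ∩ closedBall x r) / μ (closedBall x r)) (nhdsWithin 0 (Set.Ioi 0)) (nhds 1) :=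
    (ae_restrict_iff' hAmeas).1 (Besicovitch.ae_tendsto_measure_inter_div μ A)
  -- conclusion
  filter_upwards [hdf, hdg, hdens] with x h1 h2 h3 hxA
  obtain ⟨hxH, hfg⟩ := hxA
  have hfd := (h1 hxH).hasFDerivAt
  have hgd := (h2 hxH).hasFDerivAt
  have hM : HasFDerivAt (fun y => f y - g y) (fderiv ℝ f x - fderiv ℝ g x) x := hfd.sub hgd
  have hxA' : x ∈ A := ⟨hxH, hfg⟩
  have hzero : fderiv ℝ f x - fderiv ℝ g x = 0 :=
    aux_zero_of_density_one μ hxA' (h3 hxA') hM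
      (fun y hy => sub_eq_zero.2 hy.2)
  refine ⟨fderiv ℝ f x, hfd, ?_⟩
  rwa [show fderiv ℝ f x = fderiv ℝ g x from sub_eq_zero.1 hzero]
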